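/- Under sampling with replacement (batch size τ, probabilities qᵢ), the expected smoothness condition E‖g(x)‖² ≤ 2A(f(x) − f⋆) + B‖∇f(x)‖² + C holds with A = maxᵢ Lᵢ/(τ n qᵢ), B = 1 − 1/τ, C = 2AΔ, where Δ = (1/n)∑ᵢ(f⋆ − fᵢ^inf). -/

import Mathlib

open MeasureTheory ProbabilityTheory

lemma desc_grad_sq_le {E : Type*} [NormedAddCommGroup E] [InnerProductSpace ℝ E]
    [CompleteSpace E] (f : E → ℝ) (L : ℝ) (hL : 0 < L)
    (hdiff : ∀ x, DifferentiableAt ℝ f x)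
    (hlip : ∀ x y, ‖gradient f x - gradient f y‖ ≤ L * ‖x - y‖)
    (m : ℝ) (hm : ∀ x, m ≤ f x) (x : E) :
    ‖gradient f x‖ ^ 2 ≤ 2 * L * (f x - m) := by
  set g := gradient f x with hg
  set u : E := -(L⁻¹ • g) with hu
  set K : ℝ := inner ℝ g u with hK
  set M : ℝ := L / 2 * ‖u‖ ^ 2 with hM
  have hcurve : ∀ t : ℝ, HasDerivAt (fun t : ℝ => x + t • u) u t := by
    intro t
    have h1 : HasDerivAt (fun t : ℝ => t • u) ((1:ℝ) • u) t :=
      (hasDerivAt_id t).smul_const u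
    simpa using h1.const_add x
  have hφ : ∀ t : ℝ, HasDerivAt
      (fun t : ℝ => f (x + t • u) - t * K - t ^ 2 * M)
      ((inner ℝ (gradient f (x + t • u)) u : ℝ) - K - 2 * t * M) t := by
    intro t
    have h1 : HasDerivAt (fun t : ℝ => f (x + t • u))
        ((inner ℝ (gradient f (x + t • u)) u : ℝ)) t := by
      have hf : HasFDerivAt f
          (InnerProductSpace.toDual ℝ E (gradient f (x + t • u))) (x + t • u) :=
        (hdiff _).hasGradientAt.hasFDerivAt
      have h := hf.comp_hasDerivAt t (hcurve t)
      rw [InnerProductSpace.toDual_apply_apply] at h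
      exact h
    have h2 : HasDerivAt (fun t : ℝ => t * K) K t := by
      simpa using (hasDerivAt_id t).mul_const K
    have h3 : HasDerivAt (fun t : ℝ => t ^ 2 * M) (2 * t * M) t := by
      simpa [mul_comm] using (hasDerivAt_pow 2 t).mul_const M
    exact (h1.sub h2).sub h3
  have hmono : AntitoneOn (fun t : ℝ => f (x + t • u) - t * K - t ^ 2 * M)
      (Set.Ici (0:ℝ)) := by
    apply antitoneOn_of_deriv_nonpos (convex_Ici 0)
    · exact fun t _ => ((hφ t).continuousAt).continuousWithinAt
    · exact fun t _ => ((hφ t).differentiableAt).differentiableWithinAt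
    · intro t ht
      rw [interior_Ici] at ht
      rw [(hφ t).deriv]
      have htpos : (0:ℝ) < t := ht
      have key : (inner ℝ (gradient f (x + t • u)) u : ℝ) - K ≤ L * t * ‖u‖ ^ 2 := by
        have h1 : (inner ℝ (gradient f (x + t • u)) u : ℝ) - K
            = inner ℝ (gradient f (x + t • u) - g) u := by
          rw [inner_sub_left]
        rw [h1]
        calc (inner ℝ (gradient f (x + t • u) - g) u : ℝ)
            ≤ ‖gradient f (x + t • u) - g‖ * ‖u‖ := real_inner_le_norm _ _
          _ ≤ (L * ‖(x + t • u) - x‖) * ‖u‖ := by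
              apply mul_le_mul_of_nonneg_right _ (norm_nonneg u)
              exact hlip _ _
          _ = L * t * ‖u‖ ^ 2 := by
              simp [norm_smul, abs_of_pos htpos]; ring
      nlinarith [sq_nonneg ‖u‖]
  have h01 := hmono (Set.self_mem_Ici) (Set.mem_Ici.mpr zero_le_one) zero_le_one
  simp only [zero_smul, add_zero, zero_mul, sub_zero, one_smul, one_mul, one_pow] at h01
  have hKval : K = -(L⁻¹ * ‖g‖ ^ 2) := by
    simp [hK, hu, inner_neg_right, real_inner_smul_right, real_inner_self_eq_norm_sq]
  have hnu : ‖u‖ = L⁻¹ * ‖g‖ := by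
    rw [hu, norm_neg, norm_smul, Real.norm_eq_abs, abs_of_pos (inv_pos.mpr hL)]
  have hMval : M = L / 2 * (L⁻¹ * L⁻¹ * ‖g‖ ^ 2) := by
    rw [hM, hnu]; ring
  have hmx := hm (x + u)
  have hL' : L ≠ 0 := ne_of_gt hL
  rw [hKval, hMval] at h01
  have h2 : m - (-(L⁻¹ * ‖g‖ ^ 2)) - L / 2 * (L⁻¹ * L⁻¹ * ‖g‖ ^ 2) ≤ f x := by
    nlinarith [h01, hmx]
  have hs : -(-(L⁻¹ * ‖g‖ ^ 2)) - L / 2 * (L⁻¹ * L⁻¹ * ‖g‖ ^ 2) = ‖g‖ ^ 2 / (2 * L) := by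
    field_simp
    ring
  have h2' : ‖g‖ ^ 2 / (2 * L) ≤ f x - m := by linarith
  have h3 := (div_le_iff₀ (by positivity : (0:ℝ) < 2 * L)).mp h2'
  linarith

theorem es_sampling_with_replacement {Ω : Type*} [MeasureSpace Ω]
    [IsProbabilityMeasure (ℙ : Measure Ω)] {d n : ℕ} (hn : 0 < n)
    (τ : ℕ) (hτ : 1 ≤ τ)
    (q : Fin n → ℝ) (hq : ∀ i, 0 < q i) (hqsum : ∑ i, q i = 1)
    (f : Fin n → EuclideanSpace ℝ (Fin d) → ℝ)
    (L : Fin n → ℝ) (hL : ∀ i, 0 < L i)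
    (hdiff : ∀ i x, DifferentiableAt ℝ (f i) x)
    (hlip : ∀ i x y, ‖gradient (f i) x - gradient (f i) y‖ ≤ L i * ‖x - y‖)
    (finf : Fin n → ℝ) (hbound : ∀ i x, finf i ≤ f i x)
    (F : EuclideanSpace ℝ (Fin d) → ℝ) (hF : ∀ x, F x = (n : ℝ)⁻¹ * ∑ i, f i x)
    (fstar : ℝ) (hfstar : ∀ x, fstar ≤ F x)
    (X : Fin τ → Ω → Fin n)
    (hmeas : ∀ t, Measurable (X t))
    (hindep : iIndepFun X ℙ)
    (hdist : ∀ t i, ℙ {ω | X t ω = i} = ENNReal.ofReal (q i))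
    (v : Fin n → Ω → ℝ)
    (hv : ∀ i ω, v i ω =
      ((Finset.univ.filter fun t => X t ω = i).card : ℝ) / (τ * q i))
    (Δ A B C : ℝ)
    (hΔ : Δ = (n : ℝ)⁻¹ * ∑ i, (fstar - finf i))
    (hA : A = Finset.univ.sup'
      (Finset.univ_nonempty_iff.mpr ⟨⟨0, hn⟩⟩)
      (fun i : Fin n => L i / (τ * n * q i)))
    (hB : B = 1 - 1 / τ)
    (hC : C = 2 * A * Δ) :
    ∀ x, ∫ ω, ‖(n : ℝ)⁻¹ • ∑ i, v i ω • gradient (f i) x‖ ^ 2 ≤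
      2 * A * (F x - fstar) + B * ‖gradient F x‖ ^ 2 + C := by
  intro x
  classical
  have hτ0 : (0:ℝ) < τ := by exact_mod_cast Nat.lt_of_lt_of_le Nat.zero_lt_one hτ
  have hn0 : (0:ℝ) < n := by exact_mod_cast hn
  set a : Fin n → EuclideanSpace ℝ (Fin d) := fun i => gradient (f i) x with ha
  set b : Fin n → EuclideanSpace ℝ (Fin d) := fun i => ((τ:ℝ) * n * q i)⁻¹ • a i with hb
  set c : Fin n → Fin n → ℝ := fun i j => inner ℝ (b i) (b j) with hc
  -- step 1: pointwise rewrite of the sampled vector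
  have hpt : ∀ ω, (n : ℝ)⁻¹ • ∑ i, v i ω • a i = ∑ t, b (X t ω) := by
    intro ω
    have h1 : ∀ t, b (X t ω) = ∑ i, if X t ω = i then b i else 0 := by
      intro t
      rw [Finset.sum_ite_eq]
      simp
    calc (n : ℝ)⁻¹ • ∑ i, v i ω • a i = ∑ i, ((n:ℝ)⁻¹ * v i ω) • a i := by
          rw [Finset.smul_sum]
          exact Finset.sum_congr rfl fun i _ => smul_smul _ _ _
      _ = ∑ i, ∑ t, (if X t ω = i then b i else 0) := by
          apply Finset.sum_congr rfl
          intro i _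
          rw [← Finset.sum_filter, Finset.sum_const, ← Nat.cast_smul_eq_nsmul ℝ, hv i ω]
          simp only [hb, smul_smul]
          congr 1
          rw [div_eq_mul_inv, mul_inv, mul_inv]
          ring
      _ = ∑ t, b (X t ω) := by
          rw [Finset.sum_comm]
          exact Finset.sum_congr rfl fun t _ => (h1 t).symm
  -- step 2: pointwise expansion of the squared norm into indicators
  have hpt2 : ∀ ω, ‖∑ t, b (X t ω)‖ ^ 2 =
      ∑ t, ∑ s, ∑ i, ∑ j, (if X t ω = i then (1:ℝ) else 0) *
        ((if X s ω = j then (1:ℝ) else 0) * c i j) := by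
    intro ω
    rw [← real_inner_self_eq_norm_sq, sum_inner]
    apply Finset.sum_congr rfl
    intro t _
    rw [inner_sum]
    apply Finset.sum_congr rfl
    intro s _
    simp only [ite_mul, one_mul, zero_mul, Finset.sum_ite_irrel, Finset.sum_const_zero,
      Finset.sum_ite_eq, Finset.mem_univ, if_true]
    rfl
  -- indicator form
  have hind : ∀ (t s : Fin τ) (i j : Fin n) (ω : Ω),
      (if X t ω = i then (1:ℝ) else 0) * ((if X s ω = j then (1:ℝ) else 0) * c i j)
        = ((X t ⁻¹' {i}) ∩ (X s ⁻¹' {j})).indicator (fun _ => c i j) ω := by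
    intro t s i j ω
    by_cases h1 : X t ω = i <;> by_cases h2 : X s ω = j <;>
      simp [Set.indicator_apply, Set.mem_inter_iff, Set.mem_preimage, h1, h2]
  have hmeasSet : ∀ (t : Fin τ) (i : Fin n), MeasurableSet (X t ⁻¹' {i}) :=
    fun t i => (hmeas t) (measurableSet_singleton i)
  -- rewrite the integrand
  have hfun : (fun ω => ‖(n : ℝ)⁻¹ • ∑ i, v i ω • a i‖ ^ 2)
      = fun ω => ∑ p : (Fin τ × Fin τ) × Fin n × Fin n,
          ((X p.1.1 ⁻¹' {p.2.1}) ∩ (X p.1.2 ⁻¹' {p.2.2})).indicator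
            (fun _ => c p.2.1 p.2.2) ω := by
    funext ω
    rw [hpt ω, hpt2 ω]
    simp only [Fintype.sum_prod_type]
    exact Finset.sum_congr rfl fun t _ => Finset.sum_congr rfl fun s _ =>
      Finset.sum_congr rfl fun i _ => Finset.sum_congr rfl fun j _ => hind t s i j ω
  have hInteg : ∀ (t s : Fin τ) (i j : Fin n),
      Integrable (((X t ⁻¹' {i}) ∩ (X s ⁻¹' {j})).indicator (fun _ => c i j)) ℙ :=
    fun t s i j => (integrable_const _).indicator ((hmeasSet t i).inter (hmeasSet s j))
  have hval : ∀ (t s : Fin τ) (i j : Fin n),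
      ∫ ω, ((X t ⁻¹' {i}) ∩ (X s ⁻¹' {j})).indicator (fun _ => c i j) ω
        = (ℙ ((X t ⁻¹' {i}) ∩ (X s ⁻¹' {j}))).toReal * c i j := by
    intro t s i j
    rw [integral_indicator ((hmeasSet t i).inter (hmeasSet s j)), setIntegral_const,
      smul_eq_mul]
    rfl
  have hPsingle : ∀ (t : Fin τ) (i : Fin n), ℙ (X t ⁻¹' {i}) = ENNReal.ofReal (q i) :=
    fun t i => hdist t i
  set W : ℝ := ‖∑ i, q i • b i‖ ^ 2 with hW
  set M : ℝ := ∑ i, q i * c i i with hM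
  have hne : ∀ t s : Fin τ, t ≠ s →
      (∑ i, ∑ j, (ℙ ((X t ⁻¹' {i}) ∩ (X s ⁻¹' {j}))).toReal * c i j) = W := by
    intro t s hts
    have h1 : ∀ i j : Fin n, (ℙ ((X t ⁻¹' {i}) ∩ (X s ⁻¹' {j}))).toReal = q i * q j := by
      intro i j
      rw [(hindep.indepFun hts).measure_inter_preimage_eq_mul _ _
        (measurableSet_singleton i) (measurableSet_singleton j),
        hPsingle t i, hPsingle s j, ← ENNReal.ofReal_mul (le_of_lt (hq i)),
        ENNReal.toReal_ofReal (mul_nonneg (hq i).le (hq j).le)]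
    rw [hW, ← real_inner_self_eq_norm_sq, sum_inner]
    apply Finset.sum_congr rfl
    intro i _
    rw [inner_sum]
    apply Finset.sum_congr rfl
    intro j _
    rw [h1 i j, real_inner_smul_left, real_inner_smul_right]
    simp only [hc]
    ring
  have heqd : ∀ t : Fin τ,
      (∑ i, ∑ j, (ℙ ((X t ⁻¹' {i}) ∩ (X t ⁻¹' {j}))).toReal * c i j) = M := by
    intro t
    have h1 : ∀ i j : Fin n, (ℙ ((X t ⁻¹' {i}) ∩ (X t ⁻¹' {j}))).toReal * c i j
        = if i = j then q i * c i j else 0 := by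
      intro i j
      by_cases h : i = j
      · subst h
        rw [Set.inter_self, hPsingle t i, ENNReal.toReal_ofReal (le_of_lt (hq i)), if_pos rfl]
      · have hd : (X t ⁻¹' {i}) ∩ (X t ⁻¹' {j}) = ∅ := by
          ext ω'
          simp only [Set.mem_inter_iff, Set.mem_preimage, Set.mem_singleton_iff,
            Set.mem_empty_iff_false, iff_false, not_and]
          intro h1' h2'
          exact h (h1' ▸ h2' ▸ rfl)
        rw [hd, if_neg h]
        simp
    rw [hM]
    apply Finset.sum_congr rfl
    intro i _
    rw [Finset.sum_congr rfl fun j _ => h1 i j, Finset.sum_ite_eq]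
    simp
  have hTotal : ∫ ω, ‖(n : ℝ)⁻¹ • ∑ i, v i ω • a i‖ ^ 2
      = (τ:ℝ) * M + (τ:ℝ) * ((τ:ℝ) - 1) * W := by
    rw [hfun, integral_finset_sum _ (fun p _ => hInteg p.1.1 p.1.2 p.2.1 p.2.2)]
    simp only [Fintype.sum_prod_type]
    have hts : ∀ t s : Fin τ,
        (∑ i, ∑ j, ∫ ω, ((X t ⁻¹' {i}) ∩ (X s ⁻¹' {j})).indicator (fun _ => c i j) ω)
          = if t = s then M else W := by
      intro t s
      by_cases h : t = s
      · subst h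
        rw [if_pos rfl, ← heqd t]
        exact Finset.sum_congr rfl fun i _ => Finset.sum_congr rfl fun j _ => hval t t i j
      · rw [if_neg h, ← hne t s h]
        exact Finset.sum_congr rfl fun i _ => Finset.sum_congr rfl fun j _ => hval t s i j
    rw [Finset.sum_congr rfl fun t (_ : t ∈ Finset.univ) =>
      Finset.sum_congr rfl fun s (_ : s ∈ Finset.univ) => hts t s]
    have hrow : ∀ t : Fin τ, ∑ s, (if t = s then M else W) = M + ((τ:ℝ) - 1) * W := by
      intro t
      have h2 : ∀ s : Fin τ, (if t = s then M else W) = W + (if t = s then M - W else 0) := by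
        intro s; by_cases h : t = s <;> simp [h]
      rw [Finset.sum_congr rfl fun s _ => h2 s, Finset.sum_add_distrib, Finset.sum_const,
        Finset.sum_ite_eq, Finset.card_univ, Fintype.card_fin]
      simp only [Finset.mem_univ, if_true, nsmul_eq_mul]
      ring
    rw [Finset.sum_congr rfl fun t (_ : t ∈ Finset.univ) => hrow t, Finset.sum_const,
      Finset.card_univ, Fintype.card_fin, nsmul_eq_mul]
    ring
  -- gradient of F
  have hgF : HasGradientAt F ((n:ℝ)⁻¹ • ∑ i, a i) x := by
    have hsum : HasFDerivAt (fun y => ∑ i, f i y)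
        (∑ i, InnerProductSpace.toDual ℝ (EuclideanSpace ℝ (Fin d)) (a i)) x :=
      HasFDerivAt.fun_sum (fun i _ => (hdiff i x).hasGradientAt.hasFDerivAt)
    have h1 := hsum.const_mul ((n:ℝ)⁻¹)
    have h2 : (fun y => (n:ℝ)⁻¹ * ∑ i, f i y) = F := by
      funext y; rw [hF y]
    rw [h2] at h1
    have h3 := h1.hasGradientAt
    have h4 : (InnerProductSpace.toDual ℝ (EuclideanSpace ℝ (Fin d))).symm
        ((n:ℝ)⁻¹ • ∑ i, InnerProductSpace.toDual ℝ (EuclideanSpace ℝ (Fin d)) (a i))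
          = (n:ℝ)⁻¹ • ∑ i, a i := by
      rw [_root_.map_smul, map_sum]
      simp
    rw [h4] at h3
    exact h3
  have hgFx : gradient F x = (n:ℝ)⁻¹ • ∑ i, a i := hgF.gradient
  -- value of the W term
  have hWval : (τ:ℝ) * ((τ:ℝ) - 1) * W = B * ‖gradient F x‖ ^ 2 := by
    have h1 : ∑ i, q i • b i = (τ:ℝ)⁻¹ • ((n:ℝ)⁻¹ • ∑ i, a i) := by
      rw [smul_smul, Finset.smul_sum]
      apply Finset.sum_congr rfl
      intro i _
      simp only [hb, smul_smul]
      congr 1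
      linear_combination ((τ:ℝ)⁻¹ * (n:ℝ)⁻¹) * mul_inv_cancel₀ (hq i).ne'
    rw [hW, h1, ← hgFx, norm_smul, Real.norm_eq_abs, abs_of_pos (inv_pos.mpr hτ0),
      mul_pow, hB]
    field_simp
  -- bound on the M term
  have hcii : ∀ i, c i i = (((τ:ℝ)*n*q i)⁻¹)^2 * ‖a i‖^2 := by
    intro i
    simp only [hc, hb]
    rw [real_inner_self_eq_norm_sq, norm_smul, mul_pow, Real.norm_eq_abs, sq_abs]
  have hgs : ∀ i, ‖a i‖^2 ≤ 2 * L i * (f i x - finf i) := fun i => by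
    simpa [ha] using
      desc_grad_sq_le (f i) (L i) (hL i) (hdiff i) (hlip i) (finf i) (hbound i) x
  have hAi : ∀ i, L i / ((τ:ℝ)*n*q i) ≤ A := fun i => by
    rw [hA]; exact Finset.le_sup' (fun i : Fin n => L i / ((τ:ℝ) * n * q i)) (Finset.mem_univ i)
  have hterm : ∀ i, (τ:ℝ) * (q i * c i i) ≤ 2 * A * ((n:ℝ)⁻¹ * (f i x - finf i)) := by
    intro i
    have hqi := hq i
    have hDi : 0 ≤ f i x - finf i := sub_nonneg.mpr (hbound i x)
    have he : (τ:ℝ) * (q i * c i i) = (((τ:ℝ)*n*q i)⁻¹ * (n:ℝ)⁻¹) * ‖a i‖^2 := by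
      rw [hcii i]
      field_simp
    rw [he]
    calc (((τ:ℝ)*n*q i)⁻¹ * (n:ℝ)⁻¹) * ‖a i‖^2
        ≤ (((τ:ℝ)*n*q i)⁻¹ * (n:ℝ)⁻¹) * (2 * L i * (f i x - finf i)) :=
          mul_le_mul_of_nonneg_left (hgs i) (by positivity)
      _ = 2 * (L i / ((τ:ℝ)*n*q i)) * ((n:ℝ)⁻¹ * (f i x - finf i)) := by
          rw [div_eq_mul_inv]; ring
      _ ≤ 2 * A * ((n:ℝ)⁻¹ * (f i x - finf i)) := by
          apply mul_le_mul_of_nonneg_right _ (by positivity)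
          linarith [hAi i]
  have hMB : (τ:ℝ) * M ≤ 2 * A * ((F x - fstar) + Δ) := by
    have h1 : (τ:ℝ) * M = ∑ i, (τ:ℝ) * (q i * c i i) := by
      rw [hM, Finset.mul_sum]
    have h2 : ∑ i, 2 * A * ((n:ℝ)⁻¹ * (f i x - finf i)) = 2 * A * ((F x - fstar) + Δ) := by
      rw [← Finset.mul_sum, ← Finset.mul_sum]
      congr 1
      rw [hF x, hΔ, Finset.sum_sub_distrib, Finset.sum_sub_distrib]
      have hconst : ∑ _i : Fin n, fstar = (n:ℝ) * fstar := by
        simp [Finset.sum_const, Finset.card_univ, nsmul_eq_mul]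
      rw [hconst]
      have hinv : (n:ℝ)⁻¹ * n = 1 := inv_mul_cancel₀ hn0.ne'
      linear_combination (-fstar) * hinv
    calc (τ:ℝ) * M = ∑ i, (τ:ℝ) * (q i * c i i) := h1
      _ ≤ ∑ i, 2 * A * ((n:ℝ)⁻¹ * (f i x - finf i)) :=
          Finset.sum_le_sum fun i _ => hterm i
      _ = 2 * A * ((F x - fstar) + Δ) := h2
  rw [hTotal, hC]
  nlinarith [hMB, hWval]
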